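/- arXiv:1309.5979 — 2 statements merged into one kernel-verified Lean document; each statement's English description precedes it below -/
import Mathlib

section
/- For every τ ≥ 0, the soft-thresholding risk r(τ; G) is differentiable in τ and its derivative satisfies ∂r(τ; G)/∂τ = 2·E_μ[∫_{−∞}^{−μ} w·φ(w−τ) dw] + 2·E_μ[∫_{−∞}^{μ} w·φ(w−τ) dw], where the expectations are over μ ~ G. -/
open MeasureTheory

/-- Standard Gaussian density `φ(z) = e^{-z²/2}/√(2π)`. -/
noncomputable def gaussPDF (z : ℝ) : ℝ := Real.exp (-z ^ 2 / 2) / Real.sqrt (2 * Real.pi)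

/-- Soft-thresholding function `η(x; τ) = sign(x)·max(|x| − τ, 0)`. -/
noncomputable def softThr (x τ : ℝ) : ℝ := Real.sign x * max (|x| - τ) 0

/-- Soft-thresholding risk `r(τ; G) = E_{μ∼G, Z∼N(0,1)}[(η(μ + Z; τ) − μ)²]`. -/
noncomputable def stRisk (G : Measure ℝ) (τ : ℝ) : ℝ :=
  ∫ m, (∫ z, (softThr (m + z) τ - m) ^ 2 * gaussPDF z) ∂G

open Set

lemma gaussPDF_nonneg (z : ℝ) : 0 ≤ gaussPDF z :=
  div_nonneg (Real.exp_nonneg _) (Real.sqrt_nonneg _)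

lemma gaussPDF_even (z : ℝ) : gaussPDF (-z) = gaussPDF z := by simp [gaussPDF]

lemma measurable_gaussPDF : Measurable gaussPDF := by
  unfold gaussPDF; fun_prop

lemma gaussPDF_eq (z : ℝ) : gaussPDF z = (Real.sqrt (2 * Real.pi))⁻¹ * Real.exp (-(1/2) * z ^ 2) := by
  rw [gaussPDF, div_eq_inv_mul]; ring_nf

lemma integrable_gaussPDF : Integrable gaussPDF := by
  simp only [funext gaussPDF_eq]
  exact (integrable_exp_neg_mul_sq (by norm_num : (0:ℝ) < 1/2)).const_mul _

lemma integrable_abs_gaussPDF : Integrable (fun z => |z| * gaussPDF z) := by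
  simp only [funext gaussPDF_eq]
  have h := (integrable_mul_exp_neg_mul_sq (by norm_num : (0:ℝ) < 1/2)).abs
  have h2 : Integrable (fun z : ℝ => |z| * Real.exp (-(1/2) * z ^ 2)) := by
    refine h.congr (Filter.Eventually.of_forall fun z => ?_)
    simp [abs_mul, abs_of_nonneg (Real.exp_nonneg _)]
  refine (h2.const_mul ((Real.sqrt (2 * Real.pi))⁻¹)).congr
    (Filter.Eventually.of_forall fun z => by ring)

lemma integrable_sq_gaussPDF : Integrable (fun z => z ^ 2 * gaussPDF z) := by
  simp only [funext gaussPDF_eq]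
  have h := integrable_rpow_mul_exp_neg_mul_sq (by norm_num : (0:ℝ) < 1/2)
    (by norm_num : (-1:ℝ) < 2)
  have h2 : Integrable (fun z : ℝ => z ^ 2 * Real.exp (-(1/2) * z ^ 2)) := by
    refine h.congr (Filter.Eventually.of_forall fun z => ?_)
    simp [Real.rpow_natCast]
  refine (h2.const_mul ((Real.sqrt (2 * Real.pi))⁻¹)).congr
    (Filter.Eventually.of_forall fun z => by ring)

lemma abs_sign_le (x : ℝ) : |Real.sign x| ≤ 1 := by
  rcases Real.sign_apply_eq x with h | h | h <;> simp [h]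

lemma measurable_sign : Measurable Real.sign := by
  unfold Real.sign
  exact Measurable.ite (measurableSet_lt measurable_id measurable_const)
    measurable_const (Measurable.ite (measurableSet_lt measurable_const measurable_id)
      measurable_const measurable_const)

lemma sign_mul_abs' {x : ℝ} : Real.sign x * |x| = x := by
  rcases lt_trichotomy x 0 with h | h | h
  · rw [Real.sign_of_neg h, abs_of_neg h]; ring
  · simp [h]
  · rw [Real.sign_of_pos h, abs_of_pos h]; ring

lemma softThr_eq_of_lt {x t : ℝ} (h : t < |x|) : softThr x t = x - t * Real.sign x := by
  rw [softThr, max_eq_left (by linarith), mul_sub, sign_mul_abs', mul_comm]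

lemma softThr_eq_zero {x t : ℝ} (h : |x| ≤ t) : softThr x t = 0 := by
  rw [softThr, max_eq_right (by linarith), mul_zero]

lemma abs_softThr_le (x t : ℝ) : |softThr x t| ≤ |x| + |t| := by
  rw [softThr, abs_mul]
  calc |Real.sign x| * |max (|x| - t) 0| ≤ 1 * |max (|x| - t) 0| := by
        gcongr; exact abs_sign_le x
    _ = |max (|x| - t) 0| := one_mul _
    _ ≤ |x| + |t| := by
        rw [abs_of_nonneg (le_max_right _ _)]
        rcases le_or_gt (|x| - t) 0 with h | h
        · rw [max_eq_right h]; positivity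
        · rw [max_eq_left h.le]
          have := neg_abs_le t
          linarith

lemma softThr_lip (x s t : ℝ) : |softThr x t - softThr x s| ≤ |t - s| := by
  rw [softThr, softThr, ← mul_sub, abs_mul]
  calc |Real.sign x| * |max (|x| - t) 0 - max (|x| - s) 0|
      ≤ 1 * |max (|x| - t) 0 - max (|x| - s) 0| := by gcongr; exact abs_sign_le x
    _ = |max (|x| - t) 0 - max (|x| - s) 0| := one_mul _
    _ ≤ |(|x| - t) - (|x| - s)| := abs_max_sub_max_le_abs _ _ _
    _ = |t - s| := by rw [show (|x| - t) - (|x| - s) = -(t - s) by ring, abs_neg]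

lemma measurable_softThr (t : ℝ) : Measurable (fun x => softThr x t) := by
  unfold softThr
  exact (measurable_sign.mul ((measurable_abs.sub measurable_const).max measurable_const))

noncomputable def Hfun (t : ℝ) (p : ℝ × ℝ) : ℝ :=
  (softThr (p.1 + p.2) t - p.1) ^ 2 * gaussPDF p.2

/-- pointwise τ-derivative of the integrand -/

noncomputable def Hd (τ : ℝ) (p : ℝ × ℝ) : ℝ :=
  (if τ < |p.1 + p.2| then
    -2 * Real.sign (p.1 + p.2) * ((p.1 + p.2 - τ * Real.sign (p.1 + p.2)) - p.1) else 0)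
    * gaussPDF p.2

noncomputable def K2 (τ : ℝ) (p : ℝ × ℝ) : ℝ :=
  (Iio (-τ - p.1)).indicator (fun z => 2 * (z + τ) * gaussPDF z) p.2

noncomputable def K1 (τ : ℝ) (p : ℝ × ℝ) : ℝ :=
  (Ioi (τ - p.1)).indicator (fun z => 2 * (τ - z) * gaussPDF z) p.2

lemma measurable_Hfun (t : ℝ) : Measurable (Hfun t) := by
  unfold Hfun
  exact ((((measurable_softThr t).comp (measurable_fst.add measurable_snd)).sub
    measurable_fst).pow_const 2).mul (measurable_gaussPDF.comp measurable_snd)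

lemma measurable_Hd (τ : ℝ) : Measurable (Hd τ) := by
  unfold Hd
  have hx : Measurable (fun p : ℝ × ℝ => p.1 + p.2) := measurable_fst.add measurable_snd
  have hs : Measurable (fun p : ℝ × ℝ => Real.sign (p.1 + p.2)) := measurable_sign.comp hx
  refine Measurable.mul ?_ (measurable_gaussPDF.comp measurable_snd)
  refine Measurable.ite ?_ ?_ measurable_const
  · exact measurableSet_lt measurable_const hx.abs
  · exact ((measurable_const.mul hs).mul
      (((hx.sub (measurable_const.mul hs))).sub measurable_fst))

lemma measurable_K2 (τ : ℝ) : Measurable (K2 τ) := by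
  have : K2 τ = fun p : ℝ × ℝ =>
      if p.2 < -τ - p.1 then 2 * (p.2 + τ) * gaussPDF p.2 else 0 := by
    funext p; simp [K2, Set.indicator, Set.mem_Iio]
  rw [this]
  refine Measurable.ite (measurableSet_lt measurable_snd (measurable_const.sub measurable_fst))
    ?_ measurable_const
  exact (measurable_const.mul (measurable_snd.add measurable_const)).mul
    (measurable_gaussPDF.comp measurable_snd)

lemma measurable_K1 (τ : ℝ) : Measurable (K1 τ) := by
  have : K1 τ = fun p : ℝ × ℝ =>
      if τ - p.1 < p.2 then 2 * (τ - p.2) * gaussPDF p.2 else 0 := by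
    funext p; simp [K1, Set.indicator, Set.mem_Ioi]
  rw [this]
  refine Measurable.ite (measurableSet_lt (measurable_const.sub measurable_fst) measurable_snd)
    ?_ measurable_const
  exact (measurable_const.mul (measurable_const.sub measurable_snd)).mul
    (measurable_gaussPDF.comp measurable_snd)

lemma integrable_snd_gauss (G : Measure ℝ) [IsProbabilityMeasure G] {g : ℝ → ℝ} (hg : Integrable g) :
    Integrable (fun p : ℝ × ℝ => g p.2) (G.prod volume) := by
  have := (integrable_const (μ := G) (1 : ℝ)).mul_prod hg
  simpa using this

lemma integrable_Hfun (G : Measure ℝ) [IsProbabilityMeasure G] (hG : Integrable (fun m => m ^ 2) G) (t : ℝ) : Integrable (Hfun t) (G.prod volume) := by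
  have hb : Integrable (fun p : ℝ × ℝ =>
      (3 * p.2 ^ 2 + 3 * t ^ 2) * gaussPDF p.2 + 12 * (p.1 ^ 2 * gaussPDF p.2)) (G.prod volume) := by
    refine Integrable.add ?_ ((hG.mul_prod integrable_gaussPDF).const_mul 12)
    refine (integrable_snd_gauss G (g := fun z => (3 * z ^ 2 + 3 * t ^ 2) * gaussPDF z) ?_)
    have he : (fun z : ℝ => (3 * z ^ 2 + 3 * t ^ 2) * gaussPDF z)
        = fun z => 3 * (z ^ 2 * gaussPDF z) + 3 * t ^ 2 * gaussPDF z := by funext z; ring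
    rw [he]
    exact (integrable_sq_gaussPDF.const_mul 3).add (integrable_gaussPDF.const_mul (3 * t ^ 2))
  refine hb.mono' (measurable_Hfun t).aestronglyMeasurable
    (Filter.Eventually.of_forall fun p => ?_)
  obtain ⟨m, z⟩ := p
  have h1 : |softThr (m + z) t - m| ≤ |z| + |t| + 2 * |m| := by
    calc |softThr (m + z) t - m| ≤ |softThr (m + z) t| + |m| := abs_sub _ _
      _ ≤ (|m + z| + |t|) + |m| := by gcongr; exact abs_softThr_le _ _
      _ ≤ ((|m| + |z|) + |t|) + |m| := by gcongr; exact abs_add_le _ _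
      _ = |z| + |t| + 2 * |m| := by ring
  have h2 : (softThr (m + z) t - m) ^ 2 ≤ 3 * z ^ 2 + 3 * t ^ 2 + 12 * m ^ 2 := by
    have h3 : (softThr (m + z) t - m) ^ 2 = |softThr (m + z) t - m| ^ 2 := (sq_abs _).symm
    rw [h3]
    have hz := sq_abs z; have ht := sq_abs t; have hm := sq_abs m
    nlinarith [sq_nonneg (|z| - |t|), sq_nonneg (|z| - 2 * |m|), sq_nonneg (|t| - 2 * |m|),
      abs_nonneg (softThr (m + z) t - m), abs_nonneg z, abs_nonneg t, abs_nonneg m]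
  have hg := gaussPDF_nonneg z
  simp only [Hfun, Real.norm_eq_abs]
  rw [abs_mul, abs_of_nonneg hg, abs_of_nonneg (sq_nonneg _)]
  nlinarith [sq_nonneg (softThr (m + z) t - m)]

lemma integrable_K2 (G : Measure ℝ) [IsProbabilityMeasure G] (τ : ℝ) : Integrable (K2 τ) (G.prod volume) := by
  have hb : Integrable (fun p : ℝ × ℝ => (2 * |p.2| + 2 * |τ|) * gaussPDF p.2) (G.prod volume) := by
    refine integrable_snd_gauss G (g := fun z => (2 * |z| + 2 * |τ|) * gaussPDF z) ?_
    have he : (fun z : ℝ => (2 * |z| + 2 * |τ|) * gaussPDF z)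
        = fun z => 2 * (|z| * gaussPDF z) + 2 * |τ| * gaussPDF z := by funext z; ring
    rw [he]
    exact (integrable_abs_gaussPDF.const_mul 2).add (integrable_gaussPDF.const_mul (2 * |τ|))
  refine hb.mono' (measurable_K2 τ).aestronglyMeasurable (Filter.Eventually.of_forall fun p => ?_)
  obtain ⟨m, z⟩ := p
  have hg := gaussPDF_nonneg z
  simp only [K2, Real.norm_eq_abs]
  rcases Set.indicator_eq_zero_or_self (Iio (-τ - m)) (fun z => 2 * (z + τ) * gaussPDF z) z with h | h
  · rw [h]; simp; positivity
  · rw [h, abs_mul, abs_of_nonneg hg, abs_mul]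
    have : |z + τ| ≤ |z| + |τ| := abs_add_le _ _
    have h2 : |(2:ℝ)| = 2 := by norm_num
    rw [h2]
    nlinarith


lemma integrable_K1 (G : Measure ℝ) [IsProbabilityMeasure G] (τ : ℝ) :
    Integrable (K1 τ) (G.prod volume) := by
  have hb : Integrable (fun p : ℝ × ℝ => (2 * |p.2| + 2 * |τ|) * gaussPDF p.2) (G.prod volume) := by
    refine integrable_snd_gauss G (g := fun z => (2 * |z| + 2 * |τ|) * gaussPDF z) ?_
    have he : (fun z : ℝ => (2 * |z| + 2 * |τ|) * gaussPDF z)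
        = fun z => 2 * (|z| * gaussPDF z) + 2 * |τ| * gaussPDF z := by funext z; ring
    rw [he]
    exact (integrable_abs_gaussPDF.const_mul 2).add (integrable_gaussPDF.const_mul (2 * |τ|))
  refine hb.mono' (measurable_K1 τ).aestronglyMeasurable (Filter.Eventually.of_forall fun p => ?_)
  obtain ⟨m, z⟩ := p
  have hg := gaussPDF_nonneg z
  simp only [K1, Real.norm_eq_abs]
  rcases Set.indicator_eq_zero_or_self (Ioi (τ - m)) (fun z => 2 * (τ - z) * gaussPDF z) z with h | h
  · rw [h]; simp; positivity
  · rw [h, abs_mul, abs_of_nonneg hg, abs_mul]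
    have h1 : |τ - z| ≤ |τ| + |z| := abs_sub _ _
    have h2 : |(2:ℝ)| = 2 := by norm_num
    rw [h2]
    nlinarith

lemma claimA {τ : ℝ} (hτ : 0 ≤ τ) (p : ℝ × ℝ) : Hd τ p = K2 τ p + K1 τ p := by
  obtain ⟨m, z⟩ := p
  simp only [Hd, K2, K1]
  by_cases h1 : z < -τ - m
  · have hneg : m + z < 0 := by linarith
    rw [Set.indicator_of_mem (show z ∈ Iio (-τ - m) from h1),
      Set.indicator_of_notMem (show z ∉ Ioi (τ - m) by simp only [mem_Ioi, not_lt]; linarith),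
      if_pos (show τ < |m + z| by rw [abs_of_neg hneg]; linarith),
      Real.sign_of_neg hneg]
    ring
  · by_cases h2 : τ - m < z
    · have hpos : 0 < m + z := by linarith
      rw [Set.indicator_of_notMem (show z ∉ Iio (-τ - m) from h1),
        Set.indicator_of_mem (show z ∈ Ioi (τ - m) from h2),
        if_pos (show τ < |m + z| by rw [abs_of_pos hpos]; linarith),
        Real.sign_of_pos hpos]
      ring
    · rw [Set.indicator_of_notMem (show z ∉ Iio (-τ - m) from h1),
        Set.indicator_of_notMem (show z ∉ Ioi (τ - m) from h2),
        if_neg (show ¬ τ < |m + z| by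
          rw [not_lt]
          exact abs_le.mpr ⟨by simp at h1; linarith, by simp at h2; linarith⟩)]
      ring

lemma claimB (τ m : ℝ) :
    ∫ z, K2 τ (m, z) = 2 * ∫ w in Iio (-m), w * gaussPDF (w - τ) := by
  rw [← integral_indicator measurableSet_Iio, ← integral_const_mul 2 _,
    ← integral_add_right_eq_self
      (fun w => 2 * (Iio (-m)).indicator (fun w => w * gaussPDF (w - τ)) w) τ]
  congr 1; funext z
  simp only [K2]
  by_cases h : z < -τ - m
  · rw [Set.indicator_of_mem (show z ∈ Iio (-τ - m) from h),
      Set.indicator_of_mem (show z + τ ∈ Iio (-m) by simp only [mem_Iio]; linarith)]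
    rw [show z + τ - τ = z by ring]; ring
  · rw [Set.indicator_of_notMem (show z ∉ Iio (-τ - m) from h),
      Set.indicator_of_notMem (show z + τ ∉ Iio (-m) by simp only [mem_Iio, not_lt] at *; linarith)]
    ring

lemma claimC (τ m : ℝ) :
    ∫ z, K1 τ (m, z) = 2 * ∫ w in Iio m, w * gaussPDF (w - τ) := by
  have key : ∀ z : ℝ, K1 τ (m, z)
      = 2 * (Iio m).indicator (fun w => w * gaussPDF (w - τ)) (-(z - τ)) := by
    intro z
    simp only [K1]
    by_cases h : τ - m < z
    · rw [Set.indicator_of_mem (show z ∈ Ioi (τ - m) from h),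
        Set.indicator_of_mem (show -(z - τ) ∈ Iio m by simp only [mem_Iio]; linarith)]
      rw [show -(z - τ) - τ = -z by ring, gaussPDF_even]; ring
    · rw [Set.indicator_of_notMem (show z ∉ Ioi (τ - m) from h),
        Set.indicator_of_notMem
          (show -(z - τ) ∉ Iio m by simp only [mem_Iio, not_lt] at *; linarith)]
      ring
  simp_rw [key]
  rw [integral_const_mul 2 _, ← integral_indicator measurableSet_Iio]
  congr 1
  calc ∫ z, (Iio m).indicator (fun w => w * gaussPDF (w - τ)) (-(z - τ))
      = ∫ z, (fun y => (Iio m).indicator (fun w => w * gaussPDF (w - τ)) (-y)) (z - τ) := rfl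
    _ = ∫ y, (Iio m).indicator (fun w => w * gaussPDF (w - τ)) (-y) :=
        integral_sub_right_eq_self (μ := volume)
          (fun y => (Iio m).indicator (fun w => w * gaussPDF (w - τ)) (-y)) τ
    _ = ∫ w, (Iio m).indicator (fun w => w * gaussPDF (w - τ)) w := integral_neg_eq_self _ _

noncomputable def Lb (τ : ℝ) (p : ℝ × ℝ) : ℝ :=
  (2 * |p.2| + 4 * |p.1| + 2 * τ + 2) * gaussPDF p.2

lemma integrable_abs_of_sq (G : Measure ℝ) [IsProbabilityMeasure G]
    (hG : Integrable (fun m => m ^ 2) G) : Integrable (fun m : ℝ => |m|) G := by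
  refine ((integrable_const (1:ℝ)).add hG).mono' (measurable_id.abs).aestronglyMeasurable
    (Filter.Eventually.of_forall fun m => ?_)
  simp only [Real.norm_eq_abs, abs_abs, Pi.add_apply]
  nlinarith [sq_nonneg (|m| - 1), sq_abs m, abs_nonneg m]

lemma integrable_Lb (G : Measure ℝ) [IsProbabilityMeasure G]
    (hG : Integrable (fun m => m ^ 2) G) (τ : ℝ) : Integrable (Lb τ) (G.prod volume) := by
  have h1 : Integrable (fun p : ℝ × ℝ => (2 * |p.2| + 2 * τ + 2) * gaussPDF p.2)
      (G.prod volume) := by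
    refine integrable_snd_gauss G (g := fun z => (2 * |z| + 2 * τ + 2) * gaussPDF z) ?_
    have he : (fun z : ℝ => (2 * |z| + 2 * τ + 2) * gaussPDF z)
        = fun z => 2 * (|z| * gaussPDF z) + (2 * τ + 2) * gaussPDF z := by funext z; ring
    rw [he]
    exact (integrable_abs_gaussPDF.const_mul 2).add (integrable_gaussPDF.const_mul _)
  have h2 : Integrable (fun p : ℝ × ℝ => 4 * (|p.1| * gaussPDF p.2)) (G.prod volume) :=
    ((integrable_abs_of_sq G hG).mul_prod integrable_gaussPDF).const_mul 4
  refine (h1.add h2).congr (Filter.Eventually.of_forall fun p => ?_)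
  simp only [Lb, Pi.add_apply]; ring

lemma lipschitz_Hfun {τ : ℝ} (hτ : 0 ≤ τ) (p : ℝ × ℝ) :
    LipschitzOnWith (Real.nnabs (Lb τ p)) (fun t => Hfun t p) (Metric.ball τ 1) := by
  rw [lipschitzOnWith_iff_dist_le_mul]
  intro t ht s hs
  rw [Real.dist_eq, Real.dist_eq, Real.coe_nnabs]
  set x := p.1 + p.2 with hx
  have habs : ∀ u : ℝ, u ∈ Metric.ball τ 1 → |softThr x u| ≤ |p.1| + |p.2| + (τ + 1) := by
    intro u hu
    have h1 : |u - τ| < 1 := by rw [← Real.dist_eq]; exact Metric.mem_ball.mp hu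
    have h2 : |u| ≤ τ + 1 := by
      have := abs_sub_abs_le_abs_sub u τ
      rw [abs_of_nonneg hτ] at this; linarith
    calc |softThr x u| ≤ |x| + |u| := abs_softThr_le x u
      _ ≤ (|p.1| + |p.2|) + (τ + 1) := add_le_add (abs_add_le _ _) h2
  have hab : |softThr x t - softThr x s| ≤ |t - s| := softThr_lip x s t
  have key : Hfun t p - Hfun s p
      = (softThr x t - softThr x s) * (softThr x t + softThr x s - 2 * p.1) * gaussPDF p.2 := by
    simp only [Hfun, ← hx]; ring
  rw [key, abs_mul, abs_mul, abs_of_nonneg (gaussPDF_nonneg _)]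
  have hsum : |softThr x t + softThr x s - 2 * p.1| ≤ 2 * |p.2| + 4 * |p.1| + 2 * τ + 2 := by
    calc |softThr x t + softThr x s - 2 * p.1|
        ≤ |softThr x t| + |softThr x s| + 2 * |p.1| := by
          have h1 := abs_add_le (softThr x t + softThr x s) (-(2 * p.1))
          have h2 := abs_add_le (softThr x t) (softThr x s)
          simp only [abs_neg, abs_mul] at h1
          have : |(2:ℝ)| = 2 := by norm_num
          rw [this] at h1
          calc |softThr x t + softThr x s - 2 * p.1|
              = |softThr x t + softThr x s + -(2 * p.1)| := by ring_nf
            _ ≤ |softThr x t + softThr x s| + 2 * |p.1| := h1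
            _ ≤ |softThr x t| + |softThr x s| + 2 * |p.1| := by linarith
      _ ≤ (|p.1| + |p.2| + (τ + 1)) + (|p.1| + |p.2| + (τ + 1)) + 2 * |p.1| :=
          add_le_add (add_le_add (habs t ht) (habs s hs)) le_rfl
      _ = 2 * |p.2| + 4 * |p.1| + 2 * τ + 2 := by ring
  have hLb : |Lb τ p| = (2 * |p.2| + 4 * |p.1| + 2 * τ + 2) * gaussPDF p.2 := by
    have hc : (0:ℝ) ≤ 2 * |p.2| + 4 * |p.1| + 2 * τ + 2 := by
      have := abs_nonneg p.1; have := abs_nonneg p.2; linarith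
    rw [Lb, abs_of_nonneg (mul_nonneg hc (gaussPDF_nonneg _))]
  rw [hLb]
  calc |softThr x t - softThr x s| * |softThr x t + softThr x s - 2 * p.1| * gaussPDF p.2
      ≤ |t - s| * (2 * |p.2| + 4 * |p.1| + 2 * τ + 2) * gaussPDF p.2 := by
        refine mul_le_mul_of_nonneg_right ?_ (gaussPDF_nonneg _)
        exact mul_le_mul hab hsum (abs_nonneg _) (abs_nonneg _)
    _ = (2 * |p.2| + 4 * |p.1| + 2 * τ + 2) * gaussPDF p.2 * |t - s| := by ring

/-- the soft-thresholding risk is differentiable in `τ` with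
`∂r/∂τ = 2·E_μ[∫_{−∞}^{−μ} w·φ(w−τ) dw] + 2·E_μ[∫_{−∞}^{μ} w·φ(w−τ) dw]`. -/
theorem stRisk_hasDerivAt (G : Measure ℝ) [IsProbabilityMeasure G]
    (hG : Integrable (fun m => m ^ 2) G) :
    ∀ τ : ℝ, 0 ≤ τ →
      HasDerivAt (stRisk G)
        (2 * ∫ m, (∫ w in Set.Iio (-m), w * gaussPDF (w - τ)) ∂G +
         2 * ∫ m, (∫ w in Set.Iio m, w * gaussPDF (w - τ)) ∂G) τ := by
  intro τ hτ
  set ρ := G.prod (volume : Measure ℝ) with hρ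
  -- the a.e. set where pointwise differentiability holds
  have hN : ∀ᵐ p ∂ρ, p.1 + p.2 ≠ τ ∧ p.1 + p.2 ≠ -τ := by
    have hxm : Measurable fun p : ℝ × ℝ => p.1 + p.2 := measurable_fst.add measurable_snd
    have hmeas : MeasurableSet {p : ℝ × ℝ | p.1 + p.2 = τ ∨ p.1 + p.2 = -τ} := by
      have : {p : ℝ × ℝ | p.1 + p.2 = τ ∨ p.1 + p.2 = -τ}
          = (fun p : ℝ × ℝ => p.1 + p.2) ⁻¹' ({τ} ∪ {-τ}) := by
        ext p; simp [Set.mem_preimage, or_comm]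
      rw [this]
      exact hxm ((measurableSet_singleton τ).union (measurableSet_singleton (-τ)))
    have hS : ρ {p : ℝ × ℝ | p.1 + p.2 = τ ∨ p.1 + p.2 = -τ} = 0 := by
      rw [hρ, Measure.measure_prod_null hmeas]
      refine Filter.Eventually.of_forall fun m => ?_
      refine measure_mono_null (fun z hz => ?_)
        (Set.Finite.measure_zero ((Set.finite_singleton (τ - m)).union
          (Set.finite_singleton (-τ - m))) volume)
      simp only [Set.mem_preimage, Set.mem_setOf_eq] at hz
      rcases hz with h | h
      · exact Or.inl (by simp; linarith)
      · exact Or.inr (by simp; linarith)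
    have := measure_eq_zero_iff_ae_notMem.mp hS
    filter_upwards [this] with p hp
    simp only [Set.mem_setOf_eq, not_or] at hp
    exact hp
  have hdiff : ∀ᵐ p ∂ρ, HasDerivAt (fun t => Hfun t p) (Hd τ p) τ := by
    filter_upwards [hN] with p hp
    have hne : |p.1 + p.2| ≠ τ := by
      intro h
      rcases abs_eq hτ |>.mp h with h' | h'
      · exact hp.1 h'
      · exact hp.2 h'
    rcases lt_or_gt_of_ne hne with hlt | hgt
    · -- |x| < τ : soft threshold locally zero
      have hev : (fun t => Hfun t p) =ᶠ[nhds τ] fun _ => (0 - p.1) ^ 2 * gaussPDF p.2 := by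
        filter_upwards [Ioi_mem_nhds hlt] with t ht
        simp only [Hfun]
        rw [softThr_eq_zero (le_of_lt ht)]
      have h0 : HasDerivAt (fun _ : ℝ => (0 - p.1) ^ 2 * gaussPDF p.2) 0 τ := hasDerivAt_const _ _
      have := h0.congr_of_eventuallyEq hev
      refine this.congr_deriv ?_
      simp only [Hd, if_neg (not_lt.mpr hlt.le), zero_mul]
    · -- τ < |x|
      set sx := Real.sign (p.1 + p.2) with hsx
      have h1 : HasDerivAt (fun t : ℝ => p.1 + p.2 - t * sx) (-sx) τ :=
        (hasDerivAt_mul_const sx).const_sub (p.1 + p.2)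
      have h2 := ((h1.sub_const p.1).pow 2).mul_const (gaussPDF p.2)
      have hev : (fun t => Hfun t p)
          =ᶠ[nhds τ] fun t => (p.1 + p.2 - t * sx - p.1) ^ 2 * gaussPDF p.2 := by
        filter_upwards [Iio_mem_nhds hgt] with t ht
        simp only [Hfun]
        rw [softThr_eq_of_lt ht]
      have := h2.congr_of_eventuallyEq hev
      refine this.congr_deriv ?_
      simp only [Hd, if_pos hgt]
      push_cast
      ring
  obtain ⟨hint', hder⟩ := hasDerivAt_integral_of_dominated_loc_of_lip
    (F := fun t p => Hfun t p) (F' := Hd τ) (x₀ := τ) (bound := Lb τ)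
    (Metric.ball_mem_nhds τ one_pos)
    (Filter.Eventually.of_forall fun t => (measurable_Hfun t).aestronglyMeasurable)
    (integrable_Hfun G hG τ)
    (measurable_Hd τ).aestronglyMeasurable
    (Filter.Eventually.of_forall fun p => lipschitz_Hfun hτ p)
    (integrable_Lb G hG τ)
    hdiff
  have hfun : stRisk G = fun t => ∫ p, Hfun t p ∂ρ := by
    funext t
    rw [stRisk, hρ, integral_prod _ (integrable_Hfun G hG t)]
    rfl
  have hval : (2 * ∫ m, (∫ w in Set.Iio (-m), w * gaussPDF (w - τ)) ∂G +
      2 * ∫ m, (∫ w in Set.Iio m, w * gaussPDF (w - τ)) ∂G) = ∫ p, Hd τ p ∂ρ := by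
    rw [integral_congr_ae (Filter.Eventually.of_forall (claimA hτ)),
      integral_add (integrable_K2 G τ) (integrable_K1 G τ),
      integral_prod _ (integrable_K2 G τ), integral_prod _ (integrable_K1 G τ)]
    have e2 : ∫ m, (∫ z, K2 τ (m, z)) ∂G
        = ∫ m, (2 * ∫ w in Iio (-m), w * gaussPDF (w - τ)) ∂G :=
      integral_congr_ae (Filter.Eventually.of_forall fun m => claimB τ m)
    have e1 : ∫ m, (∫ z, K1 τ (m, z)) ∂G
        = ∫ m, (2 * ∫ w in Iio m, w * gaussPDF (w - τ)) ∂G :=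
      integral_congr_ae (Filter.Eventually.of_forall fun m => claimC τ m)
    rw [e2, e1, integral_const_mul, integral_const_mul]
  rw [hfun, hval]
  exact hder
end

section
/- Fix β > 0, δ ∈ (0, 1], and σ_w ≥ 0, and define Ψ(s) = σ_w² + (1/δ)·E[(η(X + √s·Z; β·√s) − X)²] for s ≥ 0. Then Ψ is a concave function of s on [0, ∞); that is, for all s₁, s₂ ≥ 0 and α ∈ [0,1], Ψ(αs₁ + (1−α)s₂) ≥ α·Ψ(s₁) + (1−α)·Ψ(s₂). -/
open MeasureTheory

namespace Psi17

open Real Set Filter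

noncomputable def PP (β x s z : ℝ) : ℝ :=
  max (x + Real.sqrt s * z - β * Real.sqrt s) 0
    + min (x + Real.sqrt s * z + β * Real.sqrt s) 0 - x

noncomputable def gg (β x s z : ℝ) : ℝ := (PP β x s z) ^ 2 * gaussPDF z

noncomputable def qq (β x s : ℝ) : ℝ := ∫ z, gg β x s z

noncomputable def hh (β x u z : ℝ) : ℝ :=
  (if -x < Real.sqrt u * (z - β) then (z - β) ^ 2 else 0)
    + (if Real.sqrt u * (z + β) < -x then (z + β) ^ 2 else 0)

noncomputable def HH (β x u : ℝ) : ℝ := ∫ z, hh β x u z * gaussPDF z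

noncomputable def KK (β x u w : ℝ) : ℝ :=
  (if -x < Real.sqrt u * w then w ^ 2 * gaussPDF (w + β) else 0)
    + (if Real.sqrt u * w < -x then w ^ 2 * gaussPDF (w - β) else 0)

lemma softThr_eq {τ : ℝ} (hτ : 0 ≤ τ) (y : ℝ) :
    softThr y τ = max (y - τ) 0 + min (y + τ) 0 := by
  rcases lt_trichotomy y 0 with hy | hy | hy
  · rw [softThr, Real.sign_of_neg hy, abs_of_neg hy]
    have h1 : max (y - τ) 0 = 0 := max_eq_right (by linarith)
    rcases le_total (y + τ) 0 with h | h
    · rw [h1, max_eq_left (by linarith : (0:ℝ) ≤ -y - τ), min_eq_left h]; ring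
    · rw [h1, max_eq_right (by linarith : -y - τ ≤ 0), min_eq_right h]; ring
  · subst hy; simp [softThr, hτ, max_eq_right, min_eq_right]
  · rw [softThr, Real.sign_of_pos hy, abs_of_pos hy, min_eq_right (by linarith : (0:ℝ) ≤ y + τ)]
    ring

lemma gaussPDF_nonneg (z : ℝ) : 0 ≤ gaussPDF z :=
  div_nonneg (Real.exp_pos _).le (Real.sqrt_nonneg _)

lemma gaussPDF_continuous : Continuous gaussPDF := by
  unfold gaussPDF; fun_prop

lemma gaussPDF_anti {a b : ℝ} (h : a ^ 2 ≤ b ^ 2) : gaussPDF b ≤ gaussPDF a := by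
  unfold gaussPDF
  have hpi : 0 < Real.sqrt (2 * Real.pi) := Real.sqrt_pos.2 (by positivity)
  have hexp : Real.exp (-b ^ 2 / 2) ≤ Real.exp (-a ^ 2 / 2) := Real.exp_le_exp.2 (by linarith)
  gcongr

lemma int_gauss : Integrable gaussPDF := by
  have h : Integrable (fun z : ℝ => Real.exp (-(1/2) * z ^ 2)) := integrable_exp_neg_mul_sq (by norm_num)
  have := h.div_const (Real.sqrt (2 * Real.pi))
  refine this.congr (ae_of_all _ fun z => ?_)
  unfold gaussPDF; ring_nf

lemma int_sq_gauss : Integrable (fun z => z ^ 2 * gaussPDF z) := by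
  have h : Integrable (fun z : ℝ => z ^ (2:ℝ) * Real.exp (-(1/2) * z ^ 2)) :=
    integrable_rpow_mul_exp_neg_mul_sq (by norm_num) (by norm_num)
  have hrw : (fun z : ℝ => z ^ (2:ℝ) * Real.exp (-(1/2) * z ^ 2))
      = fun z : ℝ => z ^ (2:ℕ) * Real.exp (-(1/2) * z ^ 2) := by
    funext z; rw [← Real.rpow_natCast z 2]; norm_num
  rw [hrw] at h
  have := h.div_const (Real.sqrt (2 * Real.pi))
  refine this.congr (ae_of_all _ fun z => ?_)
  unfold gaussPDF; ring_nf

lemma int_dom (c d : ℝ) : Integrable (fun z => (c + d * z ^ 2) * gaussPDF z) := by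
  have h := (int_gauss.const_mul c).add (int_sq_gauss.const_mul d)
  refine h.congr (ae_of_all _ fun z => ?_); simp only [Pi.add_apply]; ring

lemma sq_bound (β z : ℝ) : (|z| + β) ^ 2 ≤ 2 * β ^ 2 + 2 * z ^ 2 := by
  nlinarith [sq_abs z, sq_nonneg (|z| - β)]

lemma min_eq_neg_max (c : ℝ) : min c 0 = -max (-c) 0 := by
  rcases le_total c 0 with h | h
  · rw [min_eq_left h, max_eq_left (neg_nonneg.2 h), neg_neg]
  · rw [min_eq_right h, max_eq_right (neg_nonpos.2 h), neg_zero]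

lemma abs_min_sub_min (a b : ℝ) : |min a 0 - min b 0| ≤ |a - b| := by
  rw [min_eq_neg_max a, min_eq_neg_max b,
    show -max (-a) 0 - -max (-b) 0 = -(max (-a) 0 - max (-b) 0) by ring, abs_neg]
  calc |max (-a) 0 - max (-b) 0| ≤ |(-a) - (-b)| := abs_max_sub_max_le_abs _ _ 0
  _ = |a - b| := by rw [show (-a) - (-b) = -(a - b) by ring, abs_neg]

lemma PP_zero (β x z : ℝ) : PP β x 0 z = 0 := by
  have h := max_add_min x 0
  simp only [PP, Real.sqrt_zero, mul_zero, zero_mul, add_zero, sub_zero]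
  linarith

lemma PP_lip_s (β x z s s' : ℝ) (hβ : 0 ≤ β) :
    |PP β x s z - PP β x s' z| ≤ 2 * (|z| + β) * |Real.sqrt s - Real.sqrt s'| := by
  set A := x + Real.sqrt s * z - β * Real.sqrt s
  set A' := x + Real.sqrt s' * z - β * Real.sqrt s'
  set B := x + Real.sqrt s * z + β * Real.sqrt s
  set B' := x + Real.sqrt s' * z + β * Real.sqrt s'
  have hPP : PP β x s z - PP β x s' z = (max A 0 - max A' 0) + (min B 0 - min B' 0) := by
    simp only [PP]; ring
  have h1 : |max A 0 - max A' 0| ≤ |A - A'| := abs_max_sub_max_le_abs A A' 0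
  have h2 : |min B 0 - min B' 0| ≤ |B - B'| := abs_min_sub_min B B'
  have hA : |A - A'| ≤ (|z| + β) * |Real.sqrt s - Real.sqrt s'| := by
    have : A - A' = (Real.sqrt s - Real.sqrt s') * (z - β) := by simp only [A, A']; ring
    rw [this, abs_mul, mul_comm]
    gcongr
    calc |z - β| ≤ |z| + |β| := abs_sub _ _
    _ = |z| + β := by rw [abs_of_nonneg hβ]
  have hB : |B - B'| ≤ (|z| + β) * |Real.sqrt s - Real.sqrt s'| := by
    have : B - B' = (Real.sqrt s - Real.sqrt s') * (z + β) := by simp only [B, B']; ring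
    rw [this, abs_mul, mul_comm]
    gcongr
    calc |z + β| ≤ |z| + |β| := abs_add_le _ _
    _ = |z| + β := by rw [abs_of_nonneg hβ]
  calc |PP β x s z - PP β x s' z| ≤ |max A 0 - max A' 0| + |min B 0 - min B' 0| := by
        rw [hPP]; exact abs_add_le _ _
  _ ≤ (|z| + β) * |Real.sqrt s - Real.sqrt s'| + (|z| + β) * |Real.sqrt s - Real.sqrt s'| := by
        exact add_le_add (h1.trans hA) (h2.trans hB)
  _ = 2 * (|z| + β) * |Real.sqrt s - Real.sqrt s'| := by ring

lemma PP_abs_le (β x z s : ℝ) (hβ : 0 ≤ β) : |PP β x s z| ≤ 2 * (|z| + β) * Real.sqrt s := by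
  have h := PP_lip_s β x z s 0 hβ
  rw [PP_zero, sub_zero, Real.sqrt_zero, sub_zero, abs_of_nonneg (Real.sqrt_nonneg s)] at h
  exact h

lemma PP_lip_x (β x x' z s : ℝ) : |PP β x s z - PP β x' s z| ≤ 3 * |x - x'| := by
  set A := x + Real.sqrt s * z - β * Real.sqrt s
  set A' := x' + Real.sqrt s * z - β * Real.sqrt s
  set B := x + Real.sqrt s * z + β * Real.sqrt s
  set B' := x' + Real.sqrt s * z + β * Real.sqrt s
  have hPP : PP β x s z - PP β x' s z =
      (max A 0 - max A' 0) + (min B 0 - min B' 0) + (x' - x) := by simp only [PP]; ring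
  have h1 : |max A 0 - max A' 0| ≤ |A - A'| := abs_max_sub_max_le_abs A A' 0
  have h2 : |min B 0 - min B' 0| ≤ |B - B'| := abs_min_sub_min B B'
  have hA : A - A' = x - x' := by simp only [A, A']; ring
  have hB : B - B' = x - x' := by simp only [B, B']; ring
  rw [hA] at h1; rw [hB] at h2
  calc |PP β x s z - PP β x' s z| ≤ |(max A 0 - max A' 0) + (min B 0 - min B' 0)| + |x' - x| := by
        rw [hPP]; exact abs_add_le _ _
  _ ≤ (|max A 0 - max A' 0| + |min B 0 - min B' 0|) + |x' - x| := by
        gcongr; exact abs_add_le _ _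
  _ ≤ (|x - x'| + |x - x'|) + |x - x'| := by
        rw [abs_sub_comm x' x]; gcongr
  _ = 3 * |x - x'| := by ring

lemma PP_cont (β x s : ℝ) : Continuous (fun z => PP β x s z) := by
  unfold PP; fun_prop

lemma gg_nonneg (β x s z : ℝ) : 0 ≤ gg β x s z :=
  mul_nonneg (sq_nonneg _) (gaussPDF_nonneg z)

lemma gg_cont (β x s : ℝ) : Continuous (fun z => gg β x s z) :=
  ((PP_cont β x s).pow 2).mul gaussPDF_continuous

lemma gg_sub_le (β x z : ℝ) (hβ : 0 ≤ β) {s s' : ℝ} (hs : 0 ≤ s) (hs' : 0 ≤ s') :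
    |gg β x s z - gg β x s' z| ≤ 4 * (|z| + β) ^ 2 * gaussPDF z * |s - s'| := by
  have hzb : 0 ≤ |z| + β := by positivity
  have key : |PP β x s z ^ 2 - PP β x s' z ^ 2| ≤ 4 * (|z| + β) ^ 2 * |s - s'| := by
    have h1 : |PP β x s z - PP β x s' z| ≤ 2 * (|z| + β) * |Real.sqrt s - Real.sqrt s'| :=
      PP_lip_s β x z s s' hβ
    have h2 : |PP β x s z + PP β x s' z| ≤ 2 * (|z| + β) * (Real.sqrt s + Real.sqrt s') := by
      calc |PP β x s z + PP β x s' z| ≤ |PP β x s z| + |PP β x s' z| := abs_add_le _ _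
      _ ≤ 2 * (|z| + β) * Real.sqrt s + 2 * (|z| + β) * Real.sqrt s' :=
          add_le_add (PP_abs_le β x z s hβ) (PP_abs_le β x z s' hβ)
      _ = 2 * (|z| + β) * (Real.sqrt s + Real.sqrt s') := by ring
    have hfac : PP β x s z ^ 2 - PP β x s' z ^ 2
        = (PP β x s z - PP β x s' z) * (PP β x s z + PP β x s' z) := by ring
    have hsq : |Real.sqrt s - Real.sqrt s'| * (Real.sqrt s + Real.sqrt s') = |s - s'| := by
      rw [← abs_of_nonneg (by positivity : (0:ℝ) ≤ Real.sqrt s + Real.sqrt s'), ← abs_mul]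
      have : (Real.sqrt s - Real.sqrt s') * (Real.sqrt s + Real.sqrt s') = s - s' := by
        have h1 : Real.sqrt s ^ 2 = s := Real.sq_sqrt hs
        have h2 : Real.sqrt s' ^ 2 = s' := Real.sq_sqrt hs'
        nlinarith
      rw [this]
    calc |PP β x s z ^ 2 - PP β x s' z ^ 2|
        = |PP β x s z - PP β x s' z| * |PP β x s z + PP β x s' z| := by rw [hfac, abs_mul]
    _ ≤ (2 * (|z| + β) * |Real.sqrt s - Real.sqrt s'|) * (2 * (|z| + β) * (Real.sqrt s + Real.sqrt s')) := by
        apply mul_le_mul h1 h2 (abs_nonneg _) (by positivity)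
    _ = 4 * (|z| + β) ^ 2 * (|Real.sqrt s - Real.sqrt s'| * (Real.sqrt s + Real.sqrt s')) := by ring
    _ = 4 * (|z| + β) ^ 2 * |s - s'| := by rw [hsq]
  have : gg β x s z - gg β x s' z = (PP β x s z ^ 2 - PP β x s' z ^ 2) * gaussPDF z := by
    simp only [gg]; ring
  rw [this, abs_mul, abs_of_nonneg (gaussPDF_nonneg z)]
  calc |PP β x s z ^ 2 - PP β x s' z ^ 2| * gaussPDF z
      ≤ (4 * (|z| + β) ^ 2 * |s - s'|) * gaussPDF z :=
        mul_le_mul_of_nonneg_right key (gaussPDF_nonneg z)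
  _ = 4 * (|z| + β) ^ 2 * gaussPDF z * |s - s'| := by ring

lemma gg_abs_le (β x z : ℝ) (hβ : 0 ≤ β) {s : ℝ} (hs : 0 ≤ s) :
    |gg β x s z| ≤ 4 * (|z| + β) ^ 2 * gaussPDF z * s := by
  have h := gg_sub_le β x z hβ hs le_rfl
  have h0 : gg β x 0 z = 0 := by simp [gg, PP_zero]
  rw [h0, sub_zero, sub_zero, abs_of_nonneg hs] at h
  exact h

lemma int_bnd (β c : ℝ) : Integrable (fun z => c * (|z| + β) ^ 2 * gaussPDF z) := by
  refine (int_dom (|c| * (2 * β ^ 2)) (|c| * 2)).mono' ?_ (ae_of_all _ fun z => ?_)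
  · exact ((continuous_const.mul ((continuous_abs.add continuous_const).pow 2)).mul
      gaussPDF_continuous).aestronglyMeasurable
  · have h1 : (|z| + β) ^ 2 ≤ 2 * β ^ 2 + 2 * z ^ 2 := sq_bound β z
    have h2 : (0:ℝ) ≤ (|z| + β) ^ 2 := sq_nonneg _
    rw [Real.norm_eq_abs, abs_mul, abs_mul, abs_of_nonneg h2, abs_of_nonneg (gaussPDF_nonneg z)]
    have : |c| * (2 * β ^ 2) + |c| * 2 * z ^ 2 = |c| * (2 * β ^ 2 + 2 * z ^ 2) := by ring
    rw [this]
    exact mul_le_mul_of_nonneg_right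
      (mul_le_mul_of_nonneg_left h1 (abs_nonneg c)) (gaussPDF_nonneg z)

lemma int_gg (β x : ℝ) (hβ : 0 ≤ β) {s : ℝ} (hs : 0 ≤ s) :
    Integrable (fun z => gg β x s z) := by
  refine (((int_bnd β 4).mul_const s).mono' (gg_cont β x s).aestronglyMeasurable
    (ae_of_all _ fun z => ?_))
  rw [Real.norm_eq_abs]
  exact gg_abs_le β x z hβ hs

lemma gg_hi (β x z : ℝ) (hβ : 0 ≤ β) {s : ℝ} (hs : 0 < s)
    (h : -x < Real.sqrt s * (z - β)) :
    gg β x s z = ((z - β) ^ 2 * gaussPDF z) * s := by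
  have hA : 0 < x + Real.sqrt s * z - β * Real.sqrt s := by nlinarith
  have hB : 0 < x + Real.sqrt s * z + β * Real.sqrt s := by
    have : 0 ≤ β * Real.sqrt s := mul_nonneg hβ (Real.sqrt_nonneg s)
    nlinarith
  have hP : PP β x s z = Real.sqrt s * z - β * Real.sqrt s := by
    rw [PP, max_eq_left hA.le, min_eq_right hB.le]; ring
  have ht : Real.sqrt s ^ 2 = s := Real.sq_sqrt hs.le
  simp only [gg, hP]
  linear_combination (z - β) ^ 2 * gaussPDF z * ht

lemma gg_lo (β x z : ℝ) (hβ : 0 ≤ β) {s : ℝ} (hs : 0 < s)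
    (h : Real.sqrt s * (z + β) < -x) :
    gg β x s z = ((z + β) ^ 2 * gaussPDF z) * s := by
  have hB : x + Real.sqrt s * z + β * Real.sqrt s < 0 := by nlinarith
  have hA : x + Real.sqrt s * z - β * Real.sqrt s < 0 := by
    have : 0 ≤ β * Real.sqrt s := mul_nonneg hβ (Real.sqrt_nonneg s)
    nlinarith
  have hP : PP β x s z = Real.sqrt s * z + β * Real.sqrt s := by
    rw [PP, max_eq_right hA.le, min_eq_left hB.le]; ring
  have ht : Real.sqrt s ^ 2 = s := Real.sq_sqrt hs.le
  simp only [gg, hP]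
  linear_combination (z + β) ^ 2 * gaussPDF z * ht

lemma gg_mid (β x z : ℝ) (hβ : 0 ≤ β) {s : ℝ}
    (h1 : Real.sqrt s * (z - β) < -x) (h2 : -x < Real.sqrt s * (z + β)) :
    gg β x s z = x ^ 2 * gaussPDF z := by
  have hA : x + Real.sqrt s * z - β * Real.sqrt s < 0 := by nlinarith
  have hB : 0 < x + Real.sqrt s * z + β * Real.sqrt s := by nlinarith
  have hP : PP β x s z = -x := by
    rw [PP, max_eq_right hA.le, min_eq_right hB.le]; ring
  simp only [gg, hP]; ring

lemma hh_meas (β x u : ℝ) : Measurable (fun z => hh β x u z * gaussPDF z) := by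
  apply Measurable.mul ?_ gaussPDF_continuous.measurable
  apply Measurable.add
  · exact Measurable.ite
      (measurableSet_lt measurable_const ((continuous_id.sub continuous_const).measurable.const_mul _))
      ((continuous_id.sub continuous_const).measurable.pow_const 2) measurable_const
  · exact Measurable.ite
      (measurableSet_lt ((continuous_id.add continuous_const).measurable.const_mul _) measurable_const)
      ((continuous_id.add continuous_const).measurable.pow_const 2) measurable_const

lemma hasDeriv_qq (β x : ℝ) (hβ : 0 ≤ β) {s₀ : ℝ} (hs₀ : 0 < s₀) :
    HasDerivAt (fun s => qq β x s) (HH β x s₀) s₀ := by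
  have hsqrt : (0:ℝ) < Real.sqrt s₀ := Real.sqrt_pos.2 hs₀
  have ev_pos : ∀ᶠ s in nhds s₀, (0:ℝ) < s :=
    eventually_nhds_iff.2 ⟨Set.Ioi 0, fun y hy => hy, isOpen_Ioi, hs₀⟩
  have hcont1 : ∀ c : ℝ, ContinuousAt (fun s : ℝ => Real.sqrt s * c) s₀ :=
    fun c => (Real.continuous_sqrt.mul continuous_const).continuousAt
  have main := hasDerivAt_integral_of_dominated_loc_of_lip
    (F := fun s z => gg β x s z) (F' := fun z => hh β x s₀ z * gaussPDF z)
    (x₀ := s₀) (bound := fun z => 4 * (|z| + β) ^ 2 * gaussPDF z)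
    (s := Metric.ball s₀ s₀) (Metric.ball_mem_nhds s₀ hs₀)
    (Filter.Eventually.of_forall fun s => (gg_cont β x s).aestronglyMeasurable)
    (int_gg β x hβ hs₀.le)
    (hh_meas β x s₀).aestronglyMeasurable
    ?_ (int_bnd β 4) ?_
  · exact main.2
  · -- Lipschitz
    refine ae_of_all _ fun z => LipschitzOnWith.of_dist_le_mul fun s hs s' hs' => ?_
    have hspos : 0 < s := by
      have := Metric.mem_ball.1 hs
      rw [Real.dist_eq, abs_sub_lt_iff] at this
      linarith [this.1, this.2]
    have hs'pos : 0 < s' := by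
      have := Metric.mem_ball.1 hs'
      rw [Real.dist_eq, abs_sub_lt_iff] at this
      linarith [this.1, this.2]
    rw [Real.dist_eq, Real.dist_eq]
    have h := gg_sub_le β x z hβ hspos.le hs'pos.le
    calc |gg β x s z - gg β x s' z| ≤ 4 * (|z| + β) ^ 2 * gaussPDF z * |s - s'| := h
    _ ≤ (Real.nnabs (4 * (|z| + β) ^ 2 * gaussPDF z) : ℝ) * |s - s'| := by
        gcongr
        rw [Real.coe_nnabs]
        exact le_abs_self _
  · -- a.e. differentiability
    have hnull : (volume : Measure ℝ) ({z | Real.sqrt s₀ * (z - β) = -x}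
        ∪ {z | Real.sqrt s₀ * (z + β) = -x}) = 0 := by
      apply measure_union_null
      · refine measure_mono_null (t := {β + -x / Real.sqrt s₀}) (fun z hz => ?_) (measure_singleton _)
        simp only [Set.mem_setOf_eq] at hz
        simp only [Set.mem_singleton_iff]
        field_simp
        linarith [hz]
      · refine measure_mono_null (t := {-β + -x / Real.sqrt s₀}) (fun z hz => ?_) (measure_singleton _)
        simp only [Set.mem_setOf_eq] at hz
        simp only [Set.mem_singleton_iff]
        field_simp
        linarith [hz]
    filter_upwards [MeasureTheory.compl_mem_ae_iff.2 hnull] with z hz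
    rw [Set.compl_union, Set.mem_inter_iff, Set.mem_compl_iff, Set.mem_compl_iff,
      Set.mem_setOf_eq, Set.mem_setOf_eq] at hz
    obtain ⟨hz1, hz2⟩ := hz
    rcases lt_or_gt_of_ne (Ne.symm hz1) with h1 | h1
    · -- -x < √s₀ (z - β) : slope (z-β)²
      have hev : ∀ᶠ s in nhds s₀, -x < Real.sqrt s * (z - β) :=
        (hcont1 (z - β)).eventually_const_lt h1
      have heq : (fun s => gg β x s z) =ᶠ[nhds s₀] fun s => ((z - β) ^ 2 * gaussPDF z) * s := by
        filter_upwards [hev, ev_pos] with s hs hspos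
        exact gg_hi β x z hβ hspos hs
      have hd : HasDerivAt (fun s : ℝ => ((z - β) ^ 2 * gaussPDF z) * s)
          ((z - β) ^ 2 * gaussPDF z) s₀ := by
        simpa using (hasDerivAt_id s₀).const_mul ((z - β) ^ 2 * gaussPDF z)
      have hval : hh β x s₀ z * gaussPDF z = (z - β) ^ 2 * gaussPDF z := by
        have hfalse : ¬ (Real.sqrt s₀ * (z + β) < -x) := by
          have : Real.sqrt s₀ * (z - β) ≤ Real.sqrt s₀ * (z + β) :=
            mul_le_mul_of_nonneg_left (by linarith) hsqrt.le
          linarith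
        rw [hh, if_pos h1, if_neg hfalse, add_zero]
      rw [hval]
      exact hd.congr_of_eventuallyEq heq
    · -- √s₀ (z - β) < -x
      rcases lt_or_gt_of_ne (Ne.symm hz2) with h2 | h2
      · -- -x < √s₀ (z + β) : dead zone
        have hev1 : ∀ᶠ s in nhds s₀, Real.sqrt s * (z - β) < -x :=
          (hcont1 (z - β)).eventually_lt_const h1
        have hev2 : ∀ᶠ s in nhds s₀, -x < Real.sqrt s * (z + β) :=
          (hcont1 (z + β)).eventually_const_lt h2
        have heq : (fun s => gg β x s z) =ᶠ[nhds s₀] fun _ => x ^ 2 * gaussPDF z := by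
          filter_upwards [hev1, hev2] with s hs1 hs2
          exact gg_mid β x z hβ hs1 hs2
        have hval : hh β x s₀ z * gaussPDF z = 0 := by
          rw [hh, if_neg (by linarith), if_neg (by linarith), add_zero, zero_mul]
        rw [hval]
        exact (hasDerivAt_const s₀ (x ^ 2 * gaussPDF z)).congr_of_eventuallyEq heq
      · -- √s₀ (z + β) < -x : slope (z+β)²
        have hev : ∀ᶠ s in nhds s₀, Real.sqrt s * (z + β) < -x :=
          (hcont1 (z + β)).eventually_lt_const h2
        have heq : (fun s => gg β x s z) =ᶠ[nhds s₀] fun s => ((z + β) ^ 2 * gaussPDF z) * s := by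
          filter_upwards [hev, ev_pos] with s hs hspos
          exact gg_lo β x z hβ hspos hs
        have hd : HasDerivAt (fun s : ℝ => ((z + β) ^ 2 * gaussPDF z) * s)
            ((z + β) ^ 2 * gaussPDF z) s₀ := by
          simpa using (hasDerivAt_id s₀).const_mul ((z + β) ^ 2 * gaussPDF z)
        have hval : hh β x s₀ z * gaussPDF z = (z + β) ^ 2 * gaussPDF z := by
          have hfalse : ¬ (-x < Real.sqrt s₀ * (z - β)) := by
            have : Real.sqrt s₀ * (z - β) ≤ Real.sqrt s₀ * (z + β) :=
              mul_le_mul_of_nonneg_left (by linarith) hsqrt.le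
            linarith
          rw [hh, if_neg hfalse, if_pos h2, zero_add]
        rw [hval]
        exact hd.congr_of_eventuallyEq heq

lemma int_shift_plus (β : ℝ) : Integrable (fun w => w ^ 2 * gaussPDF (w + β)) := by
  have h : Integrable (fun z => (z - β) ^ 2 * gaussPDF z) := by
    refine (int_dom (2 * β ^ 2) 2).mono' ?_ (ae_of_all _ fun z => ?_)
    · exact (((continuous_id.sub continuous_const).pow 2).mul
        gaussPDF_continuous).aestronglyMeasurable
    · rw [Real.norm_eq_abs, abs_mul, abs_of_nonneg (sq_nonneg _),
        abs_of_nonneg (gaussPDF_nonneg z)]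
      refine mul_le_mul_of_nonneg_right ?_ (gaussPDF_nonneg z)
      nlinarith [sq_nonneg (z + β)]
  have := h.comp_add_right β
  refine this.congr (ae_of_all _ fun w => ?_)
  simp

lemma int_shift_minus (β : ℝ) : Integrable (fun w => w ^ 2 * gaussPDF (w - β)) := by
  have h : Integrable (fun z => (z + β) ^ 2 * gaussPDF z) := by
    refine (int_dom (2 * β ^ 2) 2).mono' ?_ (ae_of_all _ fun z => ?_)
    · exact (((continuous_id.add continuous_const).pow 2).mul
        gaussPDF_continuous).aestronglyMeasurable
    · rw [Real.norm_eq_abs, abs_mul, abs_of_nonneg (sq_nonneg _),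
        abs_of_nonneg (gaussPDF_nonneg z)]
      refine mul_le_mul_of_nonneg_right ?_ (gaussPDF_nonneg z)
      nlinarith [sq_nonneg (z - β)]
  have := h.comp_sub_right β
  refine this.congr (ae_of_all _ fun w => ?_)
  simp

lemma int_KK_term1 (β x u : ℝ) :
    Integrable (fun w => if -x < Real.sqrt u * w then w ^ 2 * gaussPDF (w + β) else 0) := by
  refine (int_shift_plus β).mono' ?_ (ae_of_all _ fun w => ?_)
  · apply Measurable.aestronglyMeasurable
    exact Measurable.ite (measurableSet_lt measurable_const (measurable_id.const_mul _))
      ((measurable_id.pow_const 2).mul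
        (gaussPDF_continuous.measurable.comp (measurable_id.add_const β))) measurable_const
  · rw [Real.norm_eq_abs]
    split
    · rw [abs_of_nonneg (mul_nonneg (sq_nonneg _) (gaussPDF_nonneg _))]
    · simpa using mul_nonneg (sq_nonneg w) (gaussPDF_nonneg (w + β))

lemma int_KK_term2 (β x u : ℝ) :
    Integrable (fun w => if Real.sqrt u * w < -x then w ^ 2 * gaussPDF (w - β) else 0) := by
  refine (int_shift_minus β).mono' ?_ (ae_of_all _ fun w => ?_)
  · apply Measurable.aestronglyMeasurable
    exact Measurable.ite (measurableSet_lt (measurable_id.const_mul _) measurable_const)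
      ((measurable_id.pow_const 2).mul
        (gaussPDF_continuous.measurable.comp (measurable_id.sub_const β))) measurable_const
  · rw [Real.norm_eq_abs]
    split
    · rw [abs_of_nonneg (mul_nonneg (sq_nonneg _) (gaussPDF_nonneg _))]
    · simpa using mul_nonneg (sq_nonneg w) (gaussPDF_nonneg (w - β))

lemma int_KK (β x u : ℝ) : Integrable (fun w => KK β x u w) :=
  (int_KK_term1 β x u).add (int_KK_term2 β x u)

lemma int_hh_term1 (β x u : ℝ) :
    Integrable (fun z => (if -x < Real.sqrt u * (z - β) then (z - β) ^ 2 else 0) * gaussPDF z) := by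
  refine (int_dom (2 * β ^ 2) 2).mono' ?_ (ae_of_all _ fun z => ?_)
  · apply Measurable.aestronglyMeasurable
    exact (Measurable.ite
      (measurableSet_lt measurable_const ((measurable_id.sub_const β).const_mul _))
      ((measurable_id.sub_const β).pow_const 2) measurable_const).mul
      gaussPDF_continuous.measurable
  · rw [Real.norm_eq_abs, abs_mul, abs_of_nonneg (gaussPDF_nonneg z)]
    refine mul_le_mul_of_nonneg_right ?_ (gaussPDF_nonneg z)
    have hb : (z - β) ^ 2 ≤ 2 * β ^ 2 + 2 * z ^ 2 := by
      nlinarith [sq_nonneg (z + β)]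
    split
    · rw [abs_of_nonneg (sq_nonneg _)]; exact hb
    · simpa using le_trans (sq_nonneg (z - β)) hb

lemma int_hh_term2 (β x u : ℝ) :
    Integrable (fun z => (if Real.sqrt u * (z + β) < -x then (z + β) ^ 2 else 0) * gaussPDF z) := by
  refine (int_dom (2 * β ^ 2) 2).mono' ?_ (ae_of_all _ fun z => ?_)
  · apply Measurable.aestronglyMeasurable
    exact (Measurable.ite
      (measurableSet_lt ((measurable_id.add_const β).const_mul _) measurable_const)
      ((measurable_id.add_const β).pow_const 2) measurable_const).mul
      gaussPDF_continuous.measurable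
  · rw [Real.norm_eq_abs, abs_mul, abs_of_nonneg (gaussPDF_nonneg z)]
    refine mul_le_mul_of_nonneg_right ?_ (gaussPDF_nonneg z)
    have hb : (z + β) ^ 2 ≤ 2 * β ^ 2 + 2 * z ^ 2 := by
      nlinarith [sq_nonneg (z - β)]
    split
    · rw [abs_of_nonneg (sq_nonneg _)]; exact hb
    · simpa using le_trans (sq_nonneg (z + β)) hb

lemma HH_eq (β x u : ℝ) : HH β x u = ∫ w, KK β x u w := by
  have hsplit : HH β x u
      = (∫ z, (if -x < Real.sqrt u * (z - β) then (z - β) ^ 2 else 0) * gaussPDF z)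
        + ∫ z, (if Real.sqrt u * (z + β) < -x then (z + β) ^ 2 else 0) * gaussPDF z := by
    rw [HH, ← integral_add (int_hh_term1 β x u) (int_hh_term2 β x u)]
    congr 1; funext z; rw [hh]; ring
  have ht1 : (∫ z, (if -x < Real.sqrt u * (z - β) then (z - β) ^ 2 else 0) * gaussPDF z)
      = ∫ w, (if -x < Real.sqrt u * w then w ^ 2 * gaussPDF (w + β) else 0) := by
    have := MeasureTheory.integral_add_right_eq_self
      (μ := (volume : Measure ℝ))
      (fun w => if -x < Real.sqrt u * w then w ^ 2 * gaussPDF (w + β) else 0) (-β)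
    rw [← this]
    congr 1; funext z
    simp only [add_neg_cancel_right, sub_eq_add_neg]
    split <;> simp [sub_eq_add_neg]
  have ht2 : (∫ z, (if Real.sqrt u * (z + β) < -x then (z + β) ^ 2 else 0) * gaussPDF z)
      = ∫ w, (if Real.sqrt u * w < -x then w ^ 2 * gaussPDF (w - β) else 0) := by
    have := MeasureTheory.integral_add_right_eq_self
      (μ := (volume : Measure ℝ))
      (fun w => if Real.sqrt u * w < -x then w ^ 2 * gaussPDF (w - β) else 0) β
    rw [← this]
    congr 1; funext z
    split <;> simp [add_sub_cancel_right]
  rw [hsplit, ht1, ht2, ← integral_add (int_KK_term1 β x u) (int_KK_term2 β x u)]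
  rfl

lemma HH_anti (β x : ℝ) (hβ : 0 ≤ β) {u₁ u₂ : ℝ} (h1 : 0 < u₁) (h12 : u₁ ≤ u₂) :
    HH β x u₂ ≤ HH β x u₁ := by
  have h2 : 0 < u₂ := lt_of_lt_of_le h1 h12
  have hr1 : (0:ℝ) < Real.sqrt u₁ := Real.sqrt_pos.2 h1
  have hr2 : (0:ℝ) < Real.sqrt u₂ := Real.sqrt_pos.2 h2
  have hr12 : Real.sqrt u₁ ≤ Real.sqrt u₂ := Real.sqrt_le_sqrt h12
  rw [HH_eq, HH_eq]
  refine integral_mono_ae (int_KK β x u₂) (int_KK β x u₁) ?_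
  have hnull : (volume : Measure ℝ) ({w | Real.sqrt u₁ * w = -x}
      ∪ {w | Real.sqrt u₂ * w = -x}) = 0 := by
    apply measure_union_null
    · refine measure_mono_null (t := {-x / Real.sqrt u₁}) (fun w hw => ?_) (measure_singleton _)
      simp only [Set.mem_setOf_eq] at hw
      simp only [Set.mem_singleton_iff]
      field_simp
      linarith [hw]
    · refine measure_mono_null (t := {-x / Real.sqrt u₂}) (fun w hw => ?_) (measure_singleton _)
      simp only [Set.mem_setOf_eq] at hw
      simp only [Set.mem_singleton_iff]
      field_simp
      linarith [hw]
  filter_upwards [MeasureTheory.compl_mem_ae_iff.2 hnull] with w hw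
  rw [Set.compl_union, Set.mem_inter_iff, Set.mem_compl_iff, Set.mem_compl_iff,
    Set.mem_setOf_eq, Set.mem_setOf_eq] at hw
  obtain ⟨hw1, hw2⟩ := hw
  have hwsq : (0:ℝ) ≤ w ^ 2 := sq_nonneg w
  rcases le_or_gt 0 w with hw0 | hw0
  · -- w ≥ 0
    have hmono : Real.sqrt u₁ * w ≤ Real.sqrt u₂ * w := mul_le_mul_of_nonneg_right hr12 hw0
    have hφ : gaussPDF (w + β) ≤ gaussPDF (w - β) := gaussPDF_anti (by nlinarith)
    by_cases hA : -x < Real.sqrt u₁ * w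
    · have hA2 : -x < Real.sqrt u₂ * w := lt_of_lt_of_le hA hmono
      rw [KK, KK, if_pos hA, if_pos hA2, if_neg (by linarith), if_neg (by linarith)]
    · have hA1 : Real.sqrt u₁ * w < -x := lt_of_le_of_ne (not_lt.1 hA) hw1
      rw [KK, KK, if_neg hA, if_pos hA1]
      by_cases hB : -x < Real.sqrt u₂ * w
      · rw [if_pos hB, if_neg (by linarith), add_zero, zero_add]
        exact mul_le_mul_of_nonneg_left hφ hwsq
      · have hB2 : Real.sqrt u₂ * w < -x := lt_of_le_of_ne (not_lt.1 hB) hw2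
        rw [if_neg hB, if_pos hB2]
  · -- w < 0
    have hmono : Real.sqrt u₂ * w ≤ Real.sqrt u₁ * w :=
      mul_le_mul_of_nonpos_right hr12 hw0.le
    have hφ : gaussPDF (w - β) ≤ gaussPDF (w + β) := gaussPDF_anti (by nlinarith)
    by_cases hB : Real.sqrt u₁ * w < -x
    · have hB2 : Real.sqrt u₂ * w < -x := lt_of_le_of_lt hmono hB
      rw [KK, KK, if_pos hB, if_pos hB2, if_neg (by linarith), if_neg (by linarith)]
    · have hA1 : -x < Real.sqrt u₁ * w := lt_of_le_of_ne (not_lt.1 hB) (Ne.symm hw1)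
      rw [KK, KK, if_pos hA1, if_neg hB]
      by_cases hC : Real.sqrt u₂ * w < -x
      · rw [if_pos hC, if_neg (by linarith), zero_add, add_zero]
        exact mul_le_mul_of_nonneg_left hφ hwsq
      · have hC2 : -x < Real.sqrt u₂ * w := lt_of_le_of_ne (not_lt.1 hC) (Ne.symm hw2)
        rw [if_pos hC2, if_neg hC]

lemma qq_abs_le (β x : ℝ) (hβ : 0 ≤ β) {s : ℝ} (hs : 0 ≤ s) :
    |qq β x s| ≤ (∫ z, 4 * (|z| + β) ^ 2 * gaussPDF z) * s := by
  have h1 : |qq β x s| ≤ ∫ z, |gg β x s z| := by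
    simpa [qq, Real.norm_eq_abs] using
      MeasureTheory.norm_integral_le_integral_norm (f := fun z => gg β x s z) (μ := volume)
  have h2 : (∫ z, |gg β x s z|) ≤ ∫ z, 4 * (|z| + β) ^ 2 * gaussPDF z * s := by
    refine integral_mono (int_gg β x hβ hs).abs ((int_bnd β 4).mul_const s) fun z => ?_
    exact gg_abs_le β x z hβ hs
  calc |qq β x s| ≤ ∫ z, 4 * (|z| + β) ^ 2 * gaussPDF z * s := le_trans h1 h2
  _ = (∫ z, 4 * (|z| + β) ^ 2 * gaussPDF z) * s := integral_mul_const _ _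

lemma qq_contOn (β x : ℝ) (hβ : 0 ≤ β) : ContinuousOn (fun s => qq β x s) (Set.Ici 0) := by
  intro s₀ hs₀
  rcases eq_or_lt_of_le (Set.mem_Ici.1 hs₀) with h | h
  · subst h
    have hq0 : qq β x 0 = 0 := by
      simp [qq, gg, PP_zero]
    rw [ContinuousWithinAt, hq0]
    apply squeeze_zero_norm' (a := fun s => (∫ z, 4 * (|z| + β) ^ 2 * gaussPDF z) * s)
    · filter_upwards [self_mem_nhdsWithin] with s hs
      exact qq_abs_le β x hβ (Set.mem_Ici.1 hs)
    · have : Filter.Tendsto (fun s : ℝ => (∫ z, 4 * (|z| + β) ^ 2 * gaussPDF z) * s)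
          (nhds 0) (nhds ((∫ z, 4 * (|z| + β) ^ 2 * gaussPDF z) * 0)) :=
        (continuous_const.mul continuous_id).tendsto 0
      rw [mul_zero] at this
      exact this.mono_left nhdsWithin_le_nhds
  · exact ((hasDeriv_qq β x hβ h).continuousAt).continuousWithinAt

lemma qq_concave (β x : ℝ) (hβ : 0 ≤ β) : ConcaveOn ℝ (Set.Ici 0) (fun s => qq β x s) := by
  apply AntitoneOn.concaveOn_of_deriv (convex_Ici 0) (qq_contOn β x hβ)
  · rw [interior_Ici]
    exact fun s hs => ((hasDeriv_qq β x hβ (Set.mem_Ioi.1 hs)).differentiableAt).differentiableWithinAt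
  · rw [interior_Ici]
    intro u₁ h₁ u₂ h₂ h12
    rw [(hasDeriv_qq β x hβ (Set.mem_Ioi.1 h₁)).deriv,
      (hasDeriv_qq β x hβ (Set.mem_Ioi.1 h₂)).deriv]
    exact HH_anti β x hβ (Set.mem_Ioi.1 h₁) h12

lemma qq_cont_x (β s : ℝ) (hβ : 0 ≤ β) (hs : 0 ≤ s) : Continuous (fun x => qq β x s) := by
  set D : ℝ := ∫ z, 12 * Real.sqrt s * (|z| + β) * gaussPDF z with hD
  have hint : Integrable (fun z => 12 * Real.sqrt s * (|z| + β) * gaussPDF z) := by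
    refine (int_dom (|12 * Real.sqrt s| * (1 + 2 * β ^ 2)) (|12 * Real.sqrt s| * 2)).mono'
      ?_ (ae_of_all _ fun z => ?_)
    · exact ((continuous_const.mul (continuous_abs.add continuous_const)).mul
        gaussPDF_continuous).aestronglyMeasurable
    · rw [Real.norm_eq_abs, abs_mul, abs_mul, abs_of_nonneg (by positivity : (0:ℝ) ≤ |z| + β),
        abs_of_nonneg (gaussPDF_nonneg z)]
      have hb : |z| + β ≤ (1 + 2 * β ^ 2) + 2 * z ^ 2 := by
        nlinarith [sq_abs z, sq_nonneg (|z| - 1), sq_nonneg (β - 1), abs_nonneg z]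
      have hrw : |12 * Real.sqrt s| * (1 + 2 * β ^ 2) + |12 * Real.sqrt s| * 2 * z ^ 2
          = |12 * Real.sqrt s| * ((1 + 2 * β ^ 2) + 2 * z ^ 2) := by ring
      rw [hrw]
      exact mul_le_mul_of_nonneg_right
        (mul_le_mul_of_nonneg_left hb (abs_nonneg _)) (gaussPDF_nonneg z)
  have hlip : ∀ x x' : ℝ, |qq β x s - qq β x' s| ≤ D * |x - x'| := by
    intro x x'
    have hsub : qq β x s - qq β x' s = ∫ z, (gg β x s z - gg β x' s z) :=
      (integral_sub (int_gg β x hβ hs) (int_gg β x' hβ hs)).symm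
    have h1 : |∫ z, (gg β x s z - gg β x' s z)| ≤ ∫ z, |gg β x s z - gg β x' s z| := by
      simpa [Real.norm_eq_abs] using MeasureTheory.norm_integral_le_integral_norm
        (f := fun z => gg β x s z - gg β x' s z) (μ := volume)
    have h2 : (∫ z, |gg β x s z - gg β x' s z|)
        ≤ ∫ z, 12 * Real.sqrt s * (|z| + β) * gaussPDF z * |x - x'| := by
      refine integral_mono ((int_gg β x hβ hs).sub (int_gg β x' hβ hs)).abs
        (hint.mul_const _) fun z => ?_
      have hd : gg β x s z - gg β x' s z
          = (PP β x s z ^ 2 - PP β x' s z ^ 2) * gaussPDF z := by simp only [gg]; ring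
      rw [hd, abs_mul, abs_of_nonneg (gaussPDF_nonneg z)]
      have hfac : PP β x s z ^ 2 - PP β x' s z ^ 2
          = (PP β x s z - PP β x' s z) * (PP β x s z + PP β x' s z) := by ring
      have hplus : |PP β x s z + PP β x' s z| ≤ 4 * (|z| + β) * Real.sqrt s := by
        calc |PP β x s z + PP β x' s z| ≤ |PP β x s z| + |PP β x' s z| := abs_add_le _ _
        _ ≤ 2 * (|z| + β) * Real.sqrt s + 2 * (|z| + β) * Real.sqrt s :=
            add_le_add (PP_abs_le β x z s hβ) (PP_abs_le β x' z s hβ)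
        _ = 4 * (|z| + β) * Real.sqrt s := by ring
      calc |PP β x s z ^ 2 - PP β x' s z ^ 2| * gaussPDF z
          = |PP β x s z - PP β x' s z| * |PP β x s z + PP β x' s z| * gaussPDF z := by
            rw [hfac, abs_mul]
      _ ≤ (3 * |x - x'|) * (4 * (|z| + β) * Real.sqrt s) * gaussPDF z := by
            refine mul_le_mul_of_nonneg_right ?_ (gaussPDF_nonneg z)
            exact mul_le_mul (PP_lip_x β x x' z s) hplus (abs_nonneg _) (by positivity)
      _ = 12 * Real.sqrt s * (|z| + β) * gaussPDF z * |x - x'| := by ring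
    calc |qq β x s - qq β x' s| ≤ ∫ z, |gg β x s z - gg β x' s z| := by rw [hsub]; exact h1
    _ ≤ ∫ z, 12 * Real.sqrt s * (|z| + β) * gaussPDF z * |x - x'| := h2
    _ = D * |x - x'| := by rw [integral_mul_const]
  have hl : LipschitzWith (Real.toNNReal D) (fun x => qq β x s) := by
    refine LipschitzWith.of_dist_le_mul fun x x' => ?_
    rw [Real.dist_eq, Real.dist_eq]
    calc |qq β x s - qq β x' s| ≤ D * |x - x'| := hlip x x'
    _ ≤ (Real.toNNReal D : ℝ) * |x - x'| :=
        mul_le_mul_of_nonneg_right (Real.le_coe_toNNReal D) (abs_nonneg _)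
  exact hl.continuous

lemma qq_eq_inner (β x s : ℝ) (hβ : 0 ≤ β) :
    (∫ z, (softThr (x + Real.sqrt s * z) (β * Real.sqrt s) - x) ^ 2 * gaussPDF z) = qq β x s := by
  rw [qq]
  congr 1
  funext z
  rw [softThr_eq (mul_nonneg hβ (Real.sqrt_nonneg s)), gg, PP]

end Psi17

/-- `Ψ(s) = σ_w² + (1/δ)·E[(η(X + √s·Z; β√s) − X)²]` is concave on `[0, ∞)`. -/
theorem Psi_concave (G : Measure ℝ) [IsProbabilityMeasure G]
    (hX : Integrable (fun x => x ^ 2) G)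
    (δ σw β : ℝ) (hδ : 0 < δ) (hδ1 : δ ≤ 1) (hσw : 0 ≤ σw) (hβ : 0 < β)
    (Ψ : ℝ → ℝ)
    (hΨ : ∀ s : ℝ, Ψ s = σw ^ 2 + (1 / δ) *
      ∫ x, (∫ z, (softThr (x + Real.sqrt s * z) (β * Real.sqrt s) - x) ^ 2 * gaussPDF z) ∂G) :
    ∀ s₁ s₂ α : ℝ, 0 ≤ s₁ → 0 ≤ s₂ → 0 ≤ α → α ≤ 1 →
      α * Ψ s₁ + (1 - α) * Ψ s₂ ≤ Ψ (α * s₁ + (1 - α) * s₂) := by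
  intro s₁ s₂ α hs₁ hs₂ hα0 hα1
  have hβ0 : (0:ℝ) ≤ β := hβ.le
  set sm : ℝ := α * s₁ + (1 - α) * s₂ with hsm_def
  have hsm : 0 ≤ sm :=
    add_nonneg (mul_nonneg hα0 hs₁) (mul_nonneg (by linarith) hs₂)
  -- integrability of x ↦ qq β x s over G
  have hint : ∀ s : ℝ, 0 ≤ s → Integrable (fun x => Psi17.qq β x s) G := by
    intro s hs
    refine (integrable_const ((∫ z, 4 * (|z| + β) ^ 2 * gaussPDF z) * s)).mono'
      (Psi17.qq_cont_x β s hβ0 hs).aestronglyMeasurable (ae_of_all _ fun x => ?_)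
    rw [Real.norm_eq_abs]
    exact Psi17.qq_abs_le β x hβ0 hs
  -- pointwise concavity
  have key : ∀ x : ℝ, α * Psi17.qq β x s₁ + (1 - α) * Psi17.qq β x s₂ ≤ Psi17.qq β x sm := by
    intro x
    have := (Psi17.qq_concave β x hβ0).2 (Set.mem_Ici.2 hs₁) (Set.mem_Ici.2 hs₂)
      hα0 (by linarith : (0:ℝ) ≤ 1 - α) (by ring : α + (1 - α) = 1)
    simpa [smul_eq_mul] using this
  -- integrate
  have hmono : (∫ x, (α * Psi17.qq β x s₁ + (1 - α) * Psi17.qq β x s₂) ∂G)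
      ≤ ∫ x, Psi17.qq β x sm ∂G := by
    refine integral_mono ?_ (hint sm hsm) key
    exact ((hint s₁ hs₁).const_mul α).add ((hint s₂ hs₂).const_mul (1 - α))
  have hsplit : (∫ x, (α * Psi17.qq β x s₁ + (1 - α) * Psi17.qq β x s₂) ∂G)
      = α * (∫ x, Psi17.qq β x s₁ ∂G) + (1 - α) * ∫ x, Psi17.qq β x s₂ ∂G := by
    rw [integral_add ((hint s₁ hs₁).const_mul α) ((hint s₂ hs₂).const_mul (1 - α)),
      MeasureTheory.integral_const_mul, MeasureTheory.integral_const_mul]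
  have hinner : ∀ s : ℝ,
      (∫ x, (∫ z, (softThr (x + Real.sqrt s * z) (β * Real.sqrt s) - x) ^ 2 * gaussPDF z) ∂G)
        = ∫ x, Psi17.qq β x s ∂G := by
    intro s
    congr 1
    funext x
    exact Psi17.qq_eq_inner β x s hβ0
  have hI : α * (∫ x, Psi17.qq β x s₁ ∂G) + (1 - α) * (∫ x, Psi17.qq β x s₂ ∂G)
      ≤ ∫ x, Psi17.qq β x sm ∂G := by rw [← hsplit]; exact hmono
  rw [hΨ s₁, hΨ s₂, hΨ sm, hinner s₁, hinner s₂, hinner sm]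
  have hδ' : (0:ℝ) ≤ 1 / δ := by positivity
  have := mul_le_mul_of_nonneg_left hI hδ'
  nlinarith [this]
end
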